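/- (Generating function for one-row multiparameter Q-functions) Let a = (a_k) with a_1 = 0. Then ∑_{r=0}^∞ Q_{(r);a}(x_1,…,x_n) / ∏_{j=2}^{r+1}(u−a_j) = ∏_{j=1}^n (u+x_j)/(u−x_j), as an identity of formal power series in 1/u (or in the variables x) for each finite n. -/

import Mathlib

noncomputable section

abbrev K (n : ℕ) : Type := FractionRing (MvPolynomial (Fin n) ℂ)

def Xv {n : ℕ} (i : Fin n) : K n :=
  algebraMap (MvPolynomial (Fin n) ℂ) (K n) (MvPolynomial.X i)

def Cv {n : ℕ} (c : ℂ) : K n :=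
  algebraMap (MvPolynomial (Fin n) ℂ) (K n) (MvPolynomial.C c)

/-- The product over pairs `i < j` with `i < l` of `(x i + x j)/(x i - x j)`. -/
def ratioProd {n : ℕ} (l : ℕ) (x : Fin n → K n) : K n :=
  ∏ p ∈ Finset.univ.filter (fun p : Fin n × Fin n => (p.1 : ℕ) < l ∧ p.1 < p.2),
    (x p.1 + x p.2) / (x p.1 - x p.2)


/-- The one-row multiparameter Schur P-polynomial `P_{(r);a|n}` (zero if `n = 0`). -/
def Prow (a : ℕ → ℂ) (r n : ℕ) : K n :=
  if h : 1 ≤ n then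
    Cv (((n - 1).factorial : ℂ))⁻¹ *
      ∑ ω : Equiv.Perm (Fin n),
        (∏ k ∈ Finset.range r, (Xv (ω ⟨0, h⟩) - Cv (a (k + 1)))) *
          ratioProd 1 (fun j => Xv (ω j))
  else 0

/-- The one-row multiparameter Schur Q-polynomial: `Q_{(0);a} = 1`,
`Q_{(r);a} = 2 P_{(r);a}` for `r ≥ 1`. -/
def Qrow (a : ℕ → ℂ) (r n : ℕ) : K n :=
  if r = 0 then 1 else 2 * Prow a r n

/-! ### Auxiliary lemmas -/

section PolyId

open Finset Polynomial

variable {F : Type*} [Field F]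

/-- The classical partial-fraction identity, as a polynomial identity. -/
lemma QGF_poly_id (n : ℕ) (x : Fin n → F) (hx0 : ∀ i, x i ≠ 0)
    (hinj : Function.Injective x) :
    (∏ j, (1 + Polynomial.C (x j) * Polynomial.X) : F[X])
      = ∏ j, (1 - Polynomial.C (x j) * Polynomial.X)
        + ∑ i, Polynomial.C (2 * x i * ∏ j ∈ univ.erase i, (x i + x j) / (x i - x j)) *
            Polynomial.X * ∏ j ∈ univ.erase i, (1 - Polynomial.C (x j) * Polynomial.X) := by
  have hne : ∀ i j : Fin n, i ≠ j → x i - x j ≠ 0 := fun i j h => sub_ne_zero.2 (fun e => h (hinj e))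
  rw [← sub_eq_zero]
  set Q : F[X] := _ - _ with hQ
  have hs : Function.Injective (fun i : Option (Fin n) => i.elim (0 : F) fun i => (x i)⁻¹) := by
    rintro (_|i) (_|j) hij <;>
      simp only [Option.elim_none, Option.elim_some] at hij
    · rfl
    · exact absurd hij.symm (inv_ne_zero (hx0 j))
    · exact absurd hij (inv_ne_zero (hx0 i))
    · exact congrArg some (hinj (inv_injective hij))
  apply Polynomial.eq_zero_of_natDegree_lt_card_of_eval_eq_zero Q hs
  · -- evaluations
    rintro (_ | i)
    · -- eval at 0
      simp [hQ, eval_prod, eval_finset_sum]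
    · -- eval at (x i)⁻¹
      simp only [hQ, Option.elim, eval_sub, eval_add, eval_prod, eval_finset_sum, eval_mul,
        eval_one, eval_C, eval_X, sub_eq_zero]
      have hzero : ∏ j, (1 - x j * (x i)⁻¹) = 0 :=
        Finset.prod_eq_zero (mem_univ i) (by rw [mul_inv_cancel₀ (hx0 i), sub_self])
      rw [hzero, zero_add, Finset.sum_eq_single i]
      · rw [← Finset.mul_prod_erase univ _ (mem_univ i),
          show 1 + x i * (x i)⁻¹ = 2 by rw [mul_inv_cancel₀ (hx0 i)]; norm_num]
        have per : ∀ j ∈ univ.erase i,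
            ((x i + x j) / (x i - x j) * (1 - x j * (x i)⁻¹)) = 1 + x j * (x i)⁻¹ := by
          intro j hj
          have hij : i ≠ j := fun e => (Finset.mem_erase.1 hj).1 e.symm
          have h2 := hne i j hij
          have h1 := hx0 i
          field_simp
        rw [← Finset.prod_congr rfl per, Finset.prod_mul_distrib]
        linear_combination (-(2 * (∏ j ∈ univ.erase i, (x i + x j) / (x i - x j)) *
          (∏ j ∈ univ.erase i, (1 - x j * (x i)⁻¹)))) * (mul_inv_cancel₀ (hx0 i))
      · intro k _ hk
        have hik : i ∈ univ.erase k := Finset.mem_erase.2 ⟨fun e => hk e.symm, mem_univ i⟩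
        exact mul_eq_zero_of_right _
          (Finset.prod_eq_zero hik (by rw [mul_inv_cancel₀ (hx0 i), sub_self]))
      · simp
  · -- degree bound
    have hdeg : ∀ (c : F), (1 + Polynomial.C c * Polynomial.X : F[X]).natDegree ≤ 1 := by
      intro c; compute_degree
    have hdeg' : ∀ (c : F), (1 - Polynomial.C c * Polynomial.X : F[X]).natDegree ≤ 1 := by
      intro c; compute_degree
    have h1 : (∏ j, (1 + Polynomial.C (x j) * Polynomial.X) : F[X]).natDegree ≤ n := by
      refine (Polynomial.natDegree_prod_le _ _).trans ?_
      calc ∑ j : Fin n, (1 + Polynomial.C (x j) * Polynomial.X : F[X]).natDegree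
          ≤ ∑ _j : Fin n, 1 := Finset.sum_le_sum fun j _ => hdeg _
        _ = n := by simp
    have h2 : (∏ j, (1 - Polynomial.C (x j) * Polynomial.X) : F[X]).natDegree ≤ n := by
      refine (Polynomial.natDegree_prod_le _ _).trans ?_
      calc ∑ j : Fin n, (1 - Polynomial.C (x j) * Polynomial.X : F[X]).natDegree
          ≤ ∑ _j : Fin n, 1 := Finset.sum_le_sum fun j _ => hdeg' _
        _ = n := by simp
    have h3 : (∑ i, Polynomial.C (2 * x i * ∏ j ∈ univ.erase i, (x i + x j) / (x i - x j)) *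
            Polynomial.X * ∏ j ∈ univ.erase i, (1 - Polynomial.C (x j) * Polynomial.X)
            : F[X]).natDegree ≤ n := by
      refine (Polynomial.natDegree_sum_le _ _).trans ?_
      rw [Finset.fold_max_le]
      refine ⟨Nat.zero_le _, fun i _ => ?_⟩
      refine (Polynomial.natDegree_mul_le).trans ?_
      have hx : (Polynomial.C (2 * x i * ∏ j ∈ univ.erase i, (x i + x j) / (x i - x j)) *
          Polynomial.X : F[X]).natDegree ≤ 1 := by compute_degree
      have hp : ((∏ j ∈ univ.erase i, (1 - Polynomial.C (x j) * Polynomial.X)) : F[X]).natDegree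
          ≤ n - 1 := by
        refine (Polynomial.natDegree_prod_le _ _).trans ?_
        calc ∑ j ∈ univ.erase i, (1 - Polynomial.C (x j) * Polynomial.X : F[X]).natDegree
            ≤ ∑ _j ∈ univ.erase i, 1 := Finset.sum_le_sum fun j _ => hdeg' _
          _ = n - 1 := by simp [Finset.card_erase_of_mem]
      have hn : 1 ≤ n := i.pos
      omega
    have hBS := Polynomial.natDegree_add_le
      ((∏ j, (1 - Polynomial.C (x j) * Polynomial.X)) : F[X])
      (∑ i, Polynomial.C (2 * x i * ∏ j ∈ univ.erase i, (x i + x j) / (x i - x j)) *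
            Polynomial.X * ∏ j ∈ univ.erase i, (1 - Polynomial.C (x j) * Polynomial.X))
    have hQn : Q.natDegree ≤ n := by
      rw [hQ]
      exact (Polynomial.natDegree_sub_le _ _).trans (max_le h1 (hBS.trans (max_le h2 h3)))
    simp only [Fintype.card_option, Fintype.card_fin]
    omega

end PolyId

section SeriesId

open Finset PowerSeries

variable {F : Type*} [Field F]

lemma QGF_U_ne (c : F) : (1 - C (R := F) c * X) ≠ 0 := by
  intro h
  have h1 : constantCoeff (R := F) (1 - C (R := F) c * X) = 1 := by simp
  rw [h] at h1
  simp at h1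

lemma QGF_UV (c : F) : (1 - C (R := F) c * X) * (1 - C (R := F) c * X)⁻¹ = 1 :=
  PowerSeries.mul_inv_cancel _ (by simp)

lemma QGF_VU (c : F) : (1 - C (R := F) c * X)⁻¹ * (1 - C (R := F) c * X) = 1 :=
  PowerSeries.inv_mul_cancel _ (by simp)

lemma QGF_V_eq_mk (c : F) : (1 - C (R := F) c * X)⁻¹ = PowerSeries.mk fun n => c ^ n := by
  rw [PowerSeries.inv_eq_iff_mul_eq_one (by simp)]
  ext n
  cases n with
  | zero => simp
  | succ m =>
    rw [mul_sub, mul_one, ← mul_assoc, mul_comm _ (C (R := F) c), mul_assoc, mul_comm _ X]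
    simp [PowerSeries.coeff_succ_X_mul, pow_succ, mul_comm]

lemma QGF_coeff_V (c : F) (d : ℕ) : coeff (R := F) d (1 - C (R := F) c * X)⁻¹ = c ^ d := by
  rw [QGF_V_eq_mk]; simp

/-- The telescoping terms of the one-variable generating series. -/
def QGF_Tser (x : F) (b : ℕ → F) (r : ℕ) : PowerSeries F :=
  C (R := F) (∏ k ∈ range r, (x - b (k+1))) * X ^ r * (1 - C (R := F) (b (r+1)) * X) *
    (1 - C (R := F) x * X)⁻¹ * ∏ j ∈ Icc 2 (r+1), (1 - C (R := F) (b j) * X)⁻¹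

lemma QGF_step (x : F) (b : ℕ → F) (r : ℕ) :
    C (R := F) (∏ k ∈ range r, (x - b (k+1))) * X ^ r * ∏ j ∈ Icc 2 (r+1), (1 - C (R := F) (b j) * X)⁻¹
      = QGF_Tser x b r - QGF_Tser x b (r+1) := by
  have h1 := QGF_UV (b (r+2))
  have h2 := QGF_VU x
  have h3 : (∏ j ∈ Icc 2 (r+1+1), (1 - C (R := F) (b j) * X)⁻¹)
      = (∏ j ∈ Icc 2 (r+1), (1 - C (R := F) (b j) * X)⁻¹) * (1 - C (R := F) (b (r+1+1)) * X)⁻¹ := by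
    rw [Finset.prod_Icc_succ_top (by omega : 2 ≤ r+1+1)]
  have h4 : (C (R := F) (∏ k ∈ range (r+1), (x - b (k+1))))
      = C (R := F) (∏ k ∈ range r, (x - b (k+1))) * (C (R := F) x - C (R := F) (b (r+1))) := by
    rw [Finset.prod_range_succ, map_mul, map_sub]
  unfold QGF_Tser
  simp only [show r+1+1 = r+2 from rfl] at *
  set A := C (R := F) (∏ k ∈ range r, (x - b (k+1)))
  set E := ∏ j ∈ Icc 2 (r+1), (1 - C (R := F) (b j) * X)⁻¹
  set E' := ∏ j ∈ Icc 2 (r+2), (1 - C (R := F) (b j) * X)⁻¹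
  set Vx := (1 - C (R := F) x * X)⁻¹
  linear_combination (X^(r+1) * (1 - C (R := F) (b (r+2)) * X) * Vx * E') * h4
    + (A * (C (R := F) x - C (R := F) (b (r+1))) * X^(r+1) * (1 - C (R := F) (b (r+2)) * X) * Vx) * h3
    + (A * (C (R := F) x - C (R := F) (b (r+1))) * X^(r+1) * Vx * E) * h1
    + (-(A * X^r * E)) * h2

/-- Telescoping evaluation of the partial sums of the one-variable generating series. -/
lemma QGF_tele (x : F) (b : ℕ → F) (hb : b 1 = 0) (d : ℕ) :
    ∑ r ∈ range (d+1), coeff (R := F) d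
        (C (R := F) (∏ k ∈ range r, (x - b (k+1))) * X ^ r *
          ∏ j ∈ Icc 2 (r+1), (1 - C (R := F) (b j) * X)⁻¹)
      = x ^ d := by
  have h : ∀ r, coeff (R := F) d (C (R := F) (∏ k ∈ range r, (x - b (k+1))) * X ^ r *
          ∏ j ∈ Icc 2 (r+1), (1 - C (R := F) (b j) * X)⁻¹)
      = coeff (R := F) d (QGF_Tser x b r) - coeff (R := F) d (QGF_Tser x b (r+1)) := by
    intro r; rw [QGF_step, map_sub]
  rw [Finset.sum_congr rfl fun r _ => h r, Finset.sum_range_sub']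
  have hT0 : QGF_Tser x b 0 = (1 - C (R := F) x * X)⁻¹ := by
    unfold QGF_Tser
    simp [hb]
  have hTd : coeff (R := F) d (QGF_Tser x b (d+1)) = 0 := by
    have hdvd : (X : PowerSeries F)^(d+1) ∣ QGF_Tser x b (d+1) := by
      unfold QGF_Tser
      exact Dvd.dvd.mul_right (Dvd.dvd.mul_right (Dvd.dvd.mul_right (dvd_mul_left _ _) _) _) _
    rw [PowerSeries.X_pow_dvd_iff] at hdvd
    exact hdvd d (by omega)
  rw [hT0, hTd, QGF_coeff_V, sub_zero]

set_option maxHeartbeats 1000000 in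
/-- The partial-fraction identity, as a power series identity. -/
lemma QGF_series_id (n : ℕ) (x : Fin n → F) (hx0 : ∀ i, x i ≠ 0)
    (hinj : Function.Injective x) :
    (∏ j, (1 + C (R := F) (x j) * X) * (1 - C (R := F) (x j) * X)⁻¹)
      = 1 + ∑ i, C (R := F) (2 * x i * ∏ j ∈ univ.erase i, (x i + x j) / (x i - x j)) *
          X * (1 - C (R := F) (x i) * X)⁻¹ := by
  have hprodne : (∏ j, (1 - C (R := F) (x j) * X)) ≠ 0 :=
    Finset.prod_ne_zero_iff.2 fun j _ => QGF_U_ne _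
  apply mul_right_cancel₀ hprodne
  have hpoly := congrArg (Polynomial.coeToPowerSeries.ringHom (R := F)) (QGF_poly_id n x hx0 hinj)
  simp only [map_prod, map_sum, map_mul, map_add, map_sub, map_one,
    Polynomial.coeToPowerSeries.ringHom_apply, Polynomial.coe_C, Polynomial.coe_X] at hpoly
  rw [Finset.prod_mul_distrib, mul_assoc, ← Finset.prod_mul_distrib,
    Finset.prod_congr rfl fun j _ => PowerSeries.inv_mul_cancel
      (1 - C (R := F) (x j) * X) (by simp),
    Finset.prod_const_one, mul_one, hpoly, add_mul, one_mul, Finset.sum_mul]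
  simp only [map_mul, map_prod]
  refine congrArg (fun t => (∏ j, (1 - C (R := F) (x j) * X)) + t)
    (Finset.sum_congr rfl fun i _ => ?_)
  rw [← Finset.mul_prod_erase univ (fun j => 1 - C (R := F) (x j) * X) (mem_univ i)]
  have h := PowerSeries.inv_mul_cancel (1 - C (R := F) (x i) * X) (by simp)
  linear_combination (-(C (R := F) 2 * C (R := F) (x i) * (∏ j ∈ univ.erase i, C (R := F) ((x i + x j) / (x i - x j))) *
    X * ∏ j ∈ univ.erase i, (1 - C (R := F) (x j) * X))) * h

end SeriesId

section PermSum

open Finset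

lemma QGF_Cv_mul {n : ℕ} (c c' : ℂ) : (Cv c * Cv c' : K n) = Cv (c * c') := by
  unfold Cv
  rw [← map_mul, ← map_mul]

lemma Xv_injective {n : ℕ} : Function.Injective (Xv (n := n)) := fun i j h =>
  MvPolynomial.X_injective (IsFractionRing.injective (MvPolynomial (Fin n) ℂ) (K n) h)

lemma Xv_ne_zero {n : ℕ} (i : Fin n) : Xv i ≠ 0 := by
  intro h
  have h1 := IsFractionRing.injective (MvPolynomial (Fin n) ℂ) (K n) (h.trans (map_zero _).symm)
  exact MvPolynomial.X_ne_zero i h1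

lemma QGF_ratioProd_perm (m : ℕ) (ω : Equiv.Perm (Fin (m+1))) :
    ratioProd 1 (fun j => Xv (ω j))
      = ∏ j ∈ univ.erase (ω 0), (Xv (ω 0) + Xv j) / (Xv (ω 0) - Xv j) := by
  unfold ratioProd
  have hfil : (Finset.univ.filter
        (fun p : Fin (m+1) × Fin (m+1) => (p.1 : ℕ) < 1 ∧ p.1 < p.2))
      = ({0} : Finset (Fin (m+1))) ×ˢ (univ.erase 0) := by
    ext p
    simp only [mem_filter, mem_univ, true_and, Finset.mem_product, Finset.mem_singleton,
      Finset.mem_erase, and_true]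
    constructor
    · rintro ⟨h1, h2⟩
      have hp1 : p.1 = 0 := Fin.ext (by simp only [Fin.val_zero]; omega)
      refine ⟨hp1, fun e => ?_⟩
      rw [hp1, e] at h2
      exact lt_irrefl _ h2
    · rintro ⟨h1, h2⟩
      refine ⟨by rw [h1]; simp, ?_⟩
      rw [h1]
      exact Fin.pos_of_ne_zero h2
  rw [hfil, Finset.singleton_product, Finset.prod_map]
  simp only [Function.Embedding.coeFn_mk]
  refine Finset.prod_bij' (fun j _ => ω j) (fun j _ => ω⁻¹ j) ?_ ?_ ?_ ?_ ?_
  · intro j hj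
    simp only [Finset.mem_erase, mem_univ, and_true] at hj ⊢
    exact fun e => hj (ω.injective e)
  · intro j hj
    simp only [Finset.mem_erase, mem_univ, and_true] at hj ⊢
    intro e
    apply hj
    rw [← e]
    simp
  · intro j _; simp
  · intro j _; simp
  · intro j _; rfl

/-- The permutation sum in `Prow` collapses to a sum over the image of `0`. -/
lemma QGF_Prow_eq (a : ℕ → ℂ) (r m : ℕ) :
    Prow a r (m+1) = ∑ i : Fin (m+1),
      (∏ k ∈ Finset.range r, (Xv i - Cv (a (k+1)))) *
        ∏ j ∈ univ.erase i, (Xv i + Xv j) / (Xv i - Xv j) := by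
  rw [Prow, dif_pos (Nat.succ_le_succ (Nat.zero_le m))]
  have hsum : ∑ ω : Equiv.Perm (Fin (m+1)),
        (∏ k ∈ Finset.range r, (Xv (ω ⟨0, Nat.succ_le_succ (Nat.zero_le m)⟩) - Cv (a (k + 1)))) *
          ratioProd 1 (fun j => Xv (ω j))
      = ∑ ω : Equiv.Perm (Fin (m+1)),
        ((∏ k ∈ Finset.range r, (Xv (ω 0) - Cv (a (k+1)))) *
          ∏ j ∈ univ.erase (ω 0), (Xv (ω 0) + Xv j) / (Xv (ω 0) - Xv j)) := by
    refine Finset.sum_congr rfl fun ω _ => ?_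
    rw [QGF_ratioProd_perm]
    rfl
  rw [hsum]
  rw [← Equiv.sum_comp (Equiv.Perm.decomposeFin.symm)
    (fun ω : Equiv.Perm (Fin (m+1)) =>
      (∏ k ∈ Finset.range r, (Xv (ω 0) - Cv (a (k+1)))) *
        ∏ j ∈ univ.erase (ω 0), (Xv (ω 0) + Xv j) / (Xv (ω 0) - Xv j))]
  rw [Fintype.sum_prod_type]
  simp only [Equiv.Perm.decomposeFin_symm_apply_zero]
  rw [Finset.mul_sum]
  refine Finset.sum_congr rfl fun i _ => ?_
  rw [Finset.sum_const, card_univ, Fintype.card_perm, Fintype.card_fin, nsmul_eq_mul]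
  rw [← mul_assoc]
  have hfac : ((m.factorial : K (m+1))) = Cv ((m.factorial : ℂ)) := by
    simp [Cv]
  rw [hfac, show (m + 1 - 1) = m from rfl, QGF_Cv_mul,
    inv_mul_cancel₀ (by exact_mod_cast m.factorial_ne_zero : (m.factorial : ℂ) ≠ 0)]
  simp [Cv]

end PermSum

section SumHelpers

variable {F : Type*} [CommRing F]

lemma QGF_swap {M N : ℕ} (P : Fin M → ℕ → F) (R : Fin M → F) (w : ℕ → F) :
    ∑ r ∈ Finset.range N, (2 * ∑ i, P i r * R i) * w r
      = 2 * ∑ i, R i * ∑ r ∈ Finset.range N, P i r * w r := by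
  simp only [Finset.mul_sum, Finset.sum_mul]
  rw [Finset.sum_comm]
  exact Finset.sum_congr rfl fun i _ => Finset.sum_congr rfl fun r _ => by ring

lemma QGF_ite_sum (N : ℕ) (c : F) (w : ℕ → F) :
    ∑ r ∈ Finset.range (N+1), (if r = 0 then c else 0) * w r = c * w 0 := by
  rw [Finset.sum_eq_single 0]
  · rw [if_pos rfl]
  · intro r _ hr
    rw [if_neg hr, zero_mul]
  · intro h
    exact absurd (Finset.mem_range.2 (Nat.succ_pos N)) h

end SumHelpers

set_option maxHeartbeats 1600000 in
set_option synthInstance.maxHeartbeats 400000 in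
/-- Generating function for the one-row multiparameter Schur Q-functions:
`∑_{r≥0} Q_{(r);a}/(u|τa)^r = ∏_{j=1}^n (u+x_j)/(u−x_j)`, as an identity of formal
power series in `y = 1/u` over the field of rational functions in `x_1, …, x_n`
(note `1/(u−a) = y (1−a y)⁻¹`, `(u+x)/(u−x) = (1+x y)(1−x y)⁻¹`); the `r`-th term of
the series is divisible by `y^r`, so the `d`-th coefficient only involves `r ≤ d`. -/
theorem Qrow_generating_function (a : ℕ → ℂ) (ha : a 1 = 0) (n d : ℕ) :
    (PowerSeries.coeff (R := K n) d)
        (∏ j : Fin n,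
          (1 + PowerSeries.C (R := K n) (Xv j) * PowerSeries.X) *
            (1 - PowerSeries.C (R := K n) (Xv j) * PowerSeries.X)⁻¹)
      = ∑ r ∈ Finset.range (d + 1),
          (PowerSeries.coeff (R := K n) d)
            (PowerSeries.C (R := K n) (Qrow a r n) * PowerSeries.X ^ r *
              ∏ j ∈ Finset.Icc 2 (r + 1),
                (1 - PowerSeries.C (R := K n) (Cv (a j)) * PowerSeries.X)⁻¹) := by
  cases n with
  | zero =>
    rw [Finset.univ_eq_empty, Finset.prod_empty]
    rw [Finset.sum_eq_single 0]
    · rw [show Finset.Icc 2 (0+1) = (∅ : Finset ℕ) from Finset.Icc_eq_empty (by omega)]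
      simp [Qrow]
    · intro r _ hr
      simp [Qrow, Prow, hr]
    · intro h
      exact absurd (Finset.mem_range.2 (Nat.succ_pos d)) h
  | succ m =>
    classical
    have hb : (Cv (a 1) : K (m+1)) = 0 := by
      rw [ha]
      simp [Cv]
    -- LHS via the partial fraction identity
    rw [QGF_series_id (m+1) Xv Xv_ne_zero Xv_injective, map_add, map_sum,
      PowerSeries.coeff_one]
    simp only [mul_assoc, PowerSeries.coeff_C_mul]
    -- RHS: expand `Qrow` via the permutation-sum formula
    have hQsplit : ∀ r, Qrow a r (m+1)
        = 2 * ∑ i : Fin (m+1), (∏ k ∈ Finset.range r, (Xv i - Cv (a (k+1)))) *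
            ∏ j ∈ Finset.univ.erase i, (Xv i + Xv j) / (Xv i - Xv j)
          + (if r = 0 then 1 - 2 * ∑ i : Fin (m+1),
              ∏ j ∈ Finset.univ.erase i, (Xv i + Xv j) / (Xv i - Xv j) else 0) := by
      intro r
      cases r with
      | zero =>
        rw [Qrow, if_pos rfl, if_pos rfl]
        simp only [Finset.range_zero, Finset.prod_empty, one_mul]
        ring
      | succ s =>
        rw [Qrow, if_neg (Nat.succ_ne_zero s), if_neg (Nat.succ_ne_zero s), QGF_Prow_eq, add_zero]
    simp only [hQsplit]
    simp only [add_mul, Finset.sum_add_distrib]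
    rw [QGF_swap, QGF_ite_sum]
    -- the telescoping evaluation
    have tele' : ∀ y : K (m+1), ∑ r ∈ Finset.range (d+1),
        (∏ k ∈ Finset.range r, (y - Cv (a (k+1)))) * (PowerSeries.coeff (R := K (m+1)) d)
          (PowerSeries.X ^ r * ∏ j ∈ Finset.Icc 2 (r + 1),
            (1 - PowerSeries.C (R := K (m+1)) (Cv (a j)) * PowerSeries.X)⁻¹)
        = y ^ d := by
      intro y
      have h := QGF_tele y (fun j => (Cv (a j) : K (m+1))) hb d
      simpa only [mul_assoc, PowerSeries.coeff_C_mul] using h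
    simp only [tele']
    have hw0 : (PowerSeries.coeff (R := K (m+1)) d)
        (PowerSeries.X ^ 0 * ∏ j ∈ Finset.Icc 2 (0 + 1),
          (1 - PowerSeries.C (R := K (m+1)) (Cv (a j)) * PowerSeries.X)⁻¹)
        = if d = 0 then 1 else 0 := by
      rw [pow_zero, one_mul,
        show Finset.Icc 2 (0+1) = (∅ : Finset ℕ) from Finset.Icc_eq_empty (by omega),
        Finset.prod_empty, PowerSeries.coeff_one]
    rw [hw0]
    cases d with
    | zero =>
      simp only [PowerSeries.coeff_zero_X_mul, mul_zero, Finset.sum_const_zero, add_zero,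
        pow_zero, mul_one, reduceIte]
      ring
    | succ e =>
      simp only [PowerSeries.coeff_succ_X_mul, QGF_coeff_V, Nat.succ_ne_zero, if_false,
        mul_zero, add_zero, zero_add]
      rw [Finset.mul_sum]
      refine Finset.sum_congr rfl fun i _ => ?_
      ring

end
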